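/- Let k be a field and V = k((t))((u)). For nonzero x ∈ V write exp(x) = (ν(x), ν̄(x)) ∈ ℤ², where ν(x) is the u-adic valuation and ν̄(x) is the t-adic valuation of the leading Laurent coefficient. If a, b ∈ V are nonzero elements such that the vectors exp(a) and exp(b) are linearly independent over ℚ, then a and b are algebraically independent over k. -/

import Mathlib

/-- The two-dimensional local field `k((t))((u))`: Laurent series in `u`
with coefficients Laurent series in `t`. -/
abbrev TwoDimLocalField (k : Type*) [Field k] := LaurentSeries (LaurentSeries k)

variable {k : Type*} [Field k]

/-- `ν(a)`: the `u`-adic valuation. -/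
noncomputable def nu (a : TwoDimLocalField k) : ℤ := a.order

/-- `ν̄(a)`: the `t`-adic valuation of the leading Laurent coefficient. -/
noncomputable def nubar (a : TwoDimLocalField k) : ℤ := (a.coeff a.order).order

/-- The exponent vector `exp(x) = (ν(x), ν̄(x))`, viewed in `ℚ²`. -/
noncomputable def expVec (a : TwoDimLocalField k) : Fin 2 → ℚ := ![(nu a : ℚ), (nubar a : ℚ)]

section aux

variable {R : Type*} [CommRing R] {ι : Type*}

lemma hahn_coeff_sum (s : Finset ι) (g : ι → HahnSeries ℤ R) (n : ℤ) :
    (∑ i ∈ s, g i).coeff n = ∑ i ∈ s, (g i).coeff n := by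
  induction s using Finset.cons_induction with
  | empty => simp
  | cons i s hi ih => simp [Finset.sum_cons, ih]

/-- One-level: a finite sum of nonzero Hahn series with pairwise distinct orders
is nonzero. -/
lemma sum_ne_zero_of_order_injOn {s : Finset ι} (hs : s.Nonempty)
    {g : ι → HahnSeries ℤ R}
    (hg : ∀ i ∈ s, g i ≠ 0)
    (hinj : Set.InjOn (fun i => (g i).order) s) :
    ∑ i ∈ s, g i ≠ 0 := by
  obtain ⟨i0, hi0, hmin⟩ := Finset.exists_min_image s (fun i => (g i).order) hs
  have hcoeff : (∑ i ∈ s, g i).coeff ((g i0).order) = (g i0).coeff ((g i0).order) := by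
    rw [hahn_coeff_sum]
    refine Finset.sum_eq_single_of_mem i0 hi0 ?_
    intro j hj hne
    apply HahnSeries.coeff_eq_zero_of_lt_order
    exact lt_of_le_of_ne (hmin j hj) (fun he => hne (hinj hj hi0 he.symm))
  intro h0
  rw [h0] at hcoeff
  exact (HahnSeries.coeff_order_eq_zero.not.2 (hg i0 hi0)) (hcoeff.symm.trans (by simp))

/-- The rank-two exponent vector. -/
noncomputable def wv (x : HahnSeries ℤ (HahnSeries ℤ R)) : ℤ × ℤ :=
  (x.order, (x.coeff x.order).order)

/-- Two-level: a finite sum of nonzero elements of `k((t))((u))` with pairwise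
distinct exponent vectors is nonzero. -/
lemma sum_ne_zero_of_wv_injOn {s : Finset ι} (hs : s.Nonempty)
    {g : ι → HahnSeries ℤ (HahnSeries ℤ R)}
    (hg : ∀ i ∈ s, g i ≠ 0)
    (hinj : Set.InjOn (fun i => wv (g i)) s) :
    ∑ i ∈ s, g i ≠ 0 := by
  obtain ⟨i0, hi0, hmin⟩ := Finset.exists_min_image s (fun i => (g i).order) hs
  set m := (g i0).order with hm
  set s' := s.filter (fun i => (g i).order = m) with hs'
  have hsub : s' ⊆ s := Finset.filter_subset _ _
  have hmem : ∀ i ∈ s', (g i).order = m := fun i hi => (Finset.mem_filter.mp hi).2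
  have hi0' : i0 ∈ s' := Finset.mem_filter.mpr ⟨hi0, rfl⟩
  have hcoeff : (∑ i ∈ s, g i).coeff m = ∑ i ∈ s', (g i).coeff m := by
    rw [hahn_coeff_sum]
    refine (Finset.sum_subset hsub ?_).symm
    intro i hi hni
    apply HahnSeries.coeff_eq_zero_of_lt_order
    have hne : (g i).order ≠ m := fun he => hni (Finset.mem_filter.mpr ⟨hi, he⟩)
    exact lt_of_le_of_ne (hmin i hi) (Ne.symm hne)
  have hne : ∑ i ∈ s', (g i).coeff m ≠ 0 := by
    refine sum_ne_zero_of_order_injOn ⟨i0, hi0'⟩ ?_ ?_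
    · intro i hi
      have := hmem i hi
      rw [← this]
      exact HahnSeries.coeff_order_eq_zero.not.2 (hg i (hsub hi))
    · intro i hi j hj hij
      refine hinj (hsub hi) (hsub hj) ?_
      simp only [wv, hmem i hi, hmem j hj]
      exact Prod.ext rfl hij
  intro h0
  rw [h0] at hcoeff
  exact hne (hcoeff.symm.trans (by simp))

end aux

section mult

lemma wv_mul {x y : TwoDimLocalField k} (hx : x ≠ 0) (hy : y ≠ 0) :
    wv (x * y) = wv x + wv y := by
  have hlx : x.coeff x.order ≠ 0 := HahnSeries.coeff_order_eq_zero.not.2 hx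
  have hly : y.coeff y.order ≠ 0 := HahnSeries.coeff_order_eq_zero.not.2 hy
  have h1 : (x * y).order = x.order + y.order := HahnSeries.order_mul hx hy
  have h2 : (x * y).coeff (x.order + y.order) = x.coeff x.order * y.coeff y.order := by
    rw [HahnSeries.coeff_mul_order_add_order x y, HahnSeries.leadingCoeff_eq,
      HahnSeries.leadingCoeff_eq]
  unfold wv
  rw [h1, h2, HahnSeries.order_mul hlx hly, Prod.mk_add_mk]

lemma wv_pow {x : TwoDimLocalField k} (hx : x ≠ 0) (n : ℕ) :
    wv (x ^ n) = n • wv x := by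
  induction n with
  | zero =>
    simp only [pow_zero, zero_smul]
    unfold wv
    rw [HahnSeries.order_one]
    simp [HahnSeries.coeff_one, HahnSeries.order_one]
  | succ n ih =>
    rw [pow_succ, wv_mul (pow_ne_zero n hx) hx, ih, succ_nsmul]

lemma wv_algebraMap {c : k} (hc : c ≠ 0) :
    wv (algebraMap k (TwoDimLocalField k) c) = 0 := by
  have h0 : algebraMap k (TwoDimLocalField k) c = HahnSeries.C (HahnSeries.C c) := by
    rw [HahnSeries.algebraMap_apply', PowerSeries.algebraMap_apply,
      HahnSeries.ofPowerSeries_C, HahnSeries.algebraMap_apply', PowerSeries.algebraMap_apply,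
      Algebra.algebraMap_self_apply, HahnSeries.ofPowerSeries_C]
  rw [h0]
  unfold wv
  rw [HahnSeries.order_C]
  simp [HahnSeries.C_apply, HahnSeries.coeff_single_same, HahnSeries.order_single hc]

lemma wv_eq (x : TwoDimLocalField k) : wv x = (nu x, nubar x) := rfl

end mult

/-- If `a, b ∈ k((t))((u))` are nonzero and `exp(a)`, `exp(b)` are linearly
independent over `ℚ`, then `a` and `b` are algebraically independent over `k`. -/
theorem algebraically_independent_of_exponents_independent
    (a b : TwoDimLocalField k) (ha : a ≠ 0) (hb : b ≠ 0)
    (h : LinearIndependent ℚ ![expVec a, expVec b]) :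
    AlgebraicIndependent k ![a, b] := by
  rw [algebraicIndependent_iff]
  intro p hp
  by_contra hp0
  have hsupp : p.support.Nonempty := MvPolynomial.support_nonempty.mpr hp0
  set f : (Fin 2 →₀ ℕ) → TwoDimLocalField k := fun d =>
    algebraMap k (TwoDimLocalField k) (MvPolynomial.coeff d p) * (a ^ d 0 * b ^ d 1) with hf
  have heval : ∑ d ∈ p.support, f d = 0 := by
    rw [← hp, MvPolynomial.aeval_def, MvPolynomial.eval₂_eq']
    refine Finset.sum_congr rfl fun d _ => ?_
    rw [Fin.prod_univ_two]
    simp [hf]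
  have hamne : ∀ d : Fin 2 →₀ ℕ, MvPolynomial.coeff d p ≠ 0 →
      algebraMap k (TwoDimLocalField k) (MvPolynomial.coeff d p) ≠ 0 := fun d hc =>
    (map_ne_zero_iff _ (algebraMap k (TwoDimLocalField k)).injective).mpr hc
  have hfne : ∀ d ∈ p.support, f d ≠ 0 := by
    intro d hd
    have hc : MvPolynomial.coeff d p ≠ 0 := MvPolynomial.mem_support_iff.mp hd
    exact mul_ne_zero (hamne d hc) (mul_ne_zero (pow_ne_zero _ ha) (pow_ne_zero _ hb))
  have hwv : ∀ d : Fin 2 →₀ ℕ, MvPolynomial.coeff d p ≠ 0 →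
      wv (f d) = (d 0) • wv a + (d 1) • wv b := by
    intro d hc
    rw [hf]
    simp only
    rw [wv_mul (hamne d hc) (mul_ne_zero (pow_ne_zero _ ha) (pow_ne_zero _ hb)),
      wv_mul (pow_ne_zero _ ha) (pow_ne_zero _ hb), wv_algebraMap hc,
      wv_pow ha, wv_pow hb, zero_add]
  have hinj : Set.InjOn (fun d => wv (f d)) p.support := by
    intro d hd e he hde
    have hcd : MvPolynomial.coeff d p ≠ 0 := MvPolynomial.mem_support_iff.mp hd
    have hce : MvPolynomial.coeff e p ≠ 0 := MvPolynomial.mem_support_iff.mp he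
    simp only [hwv d hcd, hwv e hce] at hde
    rw [wv_eq, wv_eq] at hde
    have h1 : (d 0 : ℤ) * nu a + (d 1 : ℤ) * nu b = (e 0 : ℤ) * nu a + (e 1 : ℤ) * nu b := by
      have := congrArg Prod.fst hde
      simpa [Prod.smul_fst, nsmul_eq_mul] using this
    have h2 : (d 0 : ℤ) * nubar a + (d 1 : ℤ) * nubar b
        = (e 0 : ℤ) * nubar a + (e 1 : ℤ) * nubar b := by
      have := congrArg Prod.snd hde
      simpa [Prod.smul_snd, nsmul_eq_mul] using this
    have h1' : (d 0 : ℚ) * (nu a : ℚ) + (d 1 : ℚ) * (nu b : ℚ)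
        = (e 0 : ℚ) * (nu a : ℚ) + (e 1 : ℚ) * (nu b : ℚ) := by exact_mod_cast h1
    have h2' : (d 0 : ℚ) * (nubar a : ℚ) + (d 1 : ℚ) * (nubar b : ℚ)
        = (e 0 : ℚ) * (nubar a : ℚ) + (e 1 : ℚ) * (nubar b : ℚ) := by exact_mod_cast h2
    have hq : ((d 0 : ℚ) - (e 0 : ℚ)) • expVec a + ((d 1 : ℚ) - (e 1 : ℚ)) • expVec b = 0 := by
      funext i
      fin_cases i <;>
        simp only [expVec, Pi.add_apply, Pi.smul_apply, Fin.zero_eta, Fin.mk_one, Fin.isValue,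
          Matrix.cons_val_zero, Matrix.cons_val_one, Matrix.head_cons, smul_eq_mul,
          Pi.zero_apply] <;> linarith
    obtain ⟨hs, ht⟩ := LinearIndependent.pair_iff.mp h _ _ hq
    have he0 : d 0 = e 0 := by
      have : (d 0 : ℚ) = (e 0 : ℚ) := by linarith
      exact_mod_cast this
    have he1 : d 1 = e 1 := by
      have : (d 1 : ℚ) = (e 1 : ℚ) := by linarith
      exact_mod_cast this
    refine Finsupp.ext fun i => ?_
    fin_cases i
    · exact he0
    · exact he1
  exact sum_ne_zero_of_wv_injOn hsupp hfne hinj heval
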